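/- arXiv:1609.08542 — 2 statements merged into one kernel-verified Lean document; each statement's English description precedes it below -/
import Mathlib

section
/- (Normal ordering for the relations XZ = ZX + W, WZ = qZW, XW = qWX) Let A be a unital associative algebra over ℝ and let X, Z, W ∈ A satisfy X·Z = Z·X + W, W·Z = q·(Z·W), and X·W = q·(W·X). Then for all natural numbers m, n: X^m·Z^n = ∑_{i=0}^{m} [i]_q!·binom(n,i)_q·binom(m,i)_q·Z^{n-i}·W^i·X^{m-i}, where every term with i > n has coefficient 0 (since binom(n,i)_q = 0), so the powers Z^{n-i} there may be interpreted via truncated subtraction. -/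
/-- The q-integer `[n]_q = (1 - q^n)/(1 - q)`. -/
noncomputable def qInt (q : ℝ) (n : ℕ) : ℝ := (1 - q ^ n) / (1 - q)

/-- The q-factorial `[n]_q! = [1]_q ⋯ [n]_q`, with `[0]_q! = 1`. -/
noncomputable def qFact (q : ℝ) : ℕ → ℝ
  | 0 => 1
  | n + 1 => qFact q n * qInt q (n + 1)

/-- The q-binomial coefficient `binom(n,m)_q`, with value `0` when `m > n`. -/
noncomputable def qBinom (q : ℝ) (n m : ℕ) : ℝ :=
  if m ≤ n then qFact q n / (qFact q m * qFact q (n - m)) else 0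

section lemmas
variable {q : ℝ}

lemma qInt_pos (hq₁ : -1 < q) (hq₂ : q < 1) {j : ℕ} (hj : 1 ≤ j) : 0 < qInt q j := by
  have h1 : (0:ℝ) < 1 - q := by linarith
  have h2 : |q| < 1 := abs_lt.mpr ⟨hq₁, hq₂⟩
  have h3 : |q ^ j| < 1 := by
    rw [abs_pow]
    calc |q| ^ j ≤ |q| ^ 1 := pow_le_pow_of_le_one (abs_nonneg q) h2.le hj
    _ = |q| := pow_one _
    _ < 1 := h2
  have h4 : q ^ j < 1 := lt_of_le_of_lt (le_abs_self _) h3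
  exact div_pos (by linarith) h1

lemma qFact_pos (hq₁ : -1 < q) (hq₂ : q < 1) (n : ℕ) : 0 < qFact q n := by
  induction n with
  | zero => norm_num [qFact]
  | succ k ih => exact mul_pos ih (qInt_pos hq₁ hq₂ (Nat.succ_le_succ (Nat.zero_le k)))

lemma qFact_ne (hq₁ : -1 < q) (hq₂ : q < 1) (n : ℕ) : qFact q n ≠ 0 :=
  (qFact_pos hq₁ hq₂ n).ne'

lemma qInt_add (hq₂ : q < 1) (a b : ℕ) : qInt q (a + b) = qInt q a + q ^ a * qInt q b := by
  have h1 : (1:ℝ) - q ≠ 0 := by intro h; nlinarith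
  simp only [qInt, pow_add]
  rw [mul_div_assoc', ← add_div]
  congr 1
  ring

lemma qBinom_zero (hq₁ : -1 < q) (hq₂ : q < 1) (n : ℕ) : qBinom q n 0 = 1 := by
  simp [qBinom, qFact, qFact_ne hq₁ hq₂ n]

lemma qPascal (hq₁ : -1 < q) (hq₂ : q < 1) (m k : ℕ) :
    qBinom q (m + 1) (k + 1) = q ^ (k + 1) * qBinom q m (k + 1) + qBinom q m k := by
  rcases lt_trichotomy (k + 1) (m + 1) with h | h | h
  · obtain ⟨a, rfl⟩ : ∃ a, m = k + 1 + a := ⟨m - (k + 1), by omega⟩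
    have e1 : k + 1 + a + 1 - (k + 1) = a + 1 := by omega
    have e2 : k + 1 + a - (k + 1) = a := by omega
    have e3 : k + 1 + a - k = a + 1 := by omega
    simp only [qBinom, if_pos (by omega : k + 1 ≤ k + 1 + a + 1),
      if_pos (by omega : k + 1 ≤ k + 1 + a), if_pos (by omega : k ≤ k + 1 + a), e1, e2, e3]
    have F1 : qFact q (k + 1 + a + 1) = qFact q (k + 1 + a) * qInt q (k + 1 + a + 1) := rfl
    have F2 : qFact q (a + 1) = qFact q a * qInt q (a + 1) := rfl
    have F3 : qFact q (k + 1) = qFact q k * qInt q (k + 1) := rfl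
    have hadd : qInt q (k + 1 + a + 1) = qInt q (k + 1) + q ^ (k + 1) * qInt q (a + 1) := by
      rw [← qInt_add hq₂ (k + 1) (a + 1)]; ring_nf
    rw [F1, F2, F3, hadd]
    have h1 := qFact_ne hq₁ hq₂ k
    have h2 := qFact_ne hq₁ hq₂ a
    have h3 := qFact_ne hq₁ hq₂ (k + 1 + a)
    have h4 := (qInt_pos hq₁ hq₂ (by omega : 1 ≤ k + 1)).ne'
    have h5 := (qInt_pos hq₁ hq₂ (by omega : 1 ≤ a + 1)).ne'
    field_simp
    ring
  · have hk : k = m := by omega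
    subst hk
    simp only [qBinom, if_pos (le_refl (k + 1)), if_pos (le_refl k),
      Nat.sub_self, qFact, Nat.add_sub_cancel_left]
    rw [if_neg (by omega : ¬ k + 1 ≤ k), mul_zero, zero_add]
    have h1 := qFact_ne hq₁ hq₂ k
    have h4 := (qInt_pos hq₁ hq₂ (by omega : 1 ≤ k + 1)).ne'
    field_simp
  · have h1 : ¬(k + 1 ≤ m + 1) := by omega
    have h2 : ¬(k + 1 ≤ m) := by omega
    have h3 : ¬(k ≤ m) := by omega
    simp [qBinom, h1, h2, h3]

lemma qAbsorb (hq₁ : -1 < q) (hq₂ : q < 1) (n k : ℕ) :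
    qInt q (k + 1) * qBinom q n (k + 1) = qInt q (n - k) * qBinom q n k := by
  rcases le_or_gt (k + 1) n with h | h
  · obtain ⟨a, rfl⟩ : ∃ a, n = k + 1 + a := ⟨n - (k + 1), by omega⟩
    have e1 : k + 1 + a - (k + 1) = a := by omega
    have e2 : k + 1 + a - k = a + 1 := by omega
    simp only [qBinom, if_pos (by omega : k + 1 ≤ k + 1 + a),
      if_pos (by omega : k ≤ k + 1 + a), e1, e2]
    have F2 : qFact q (a + 1) = qFact q a * qInt q (a + 1) := rfl
    have F3 : qFact q (k + 1) = qFact q k * qInt q (k + 1) := rfl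
    rw [F2, F3]
    have h1 := qFact_ne hq₁ hq₂ k
    have h2 := qFact_ne hq₁ hq₂ a
    have h4 := (qInt_pos hq₁ hq₂ (by omega : 1 ≤ k + 1)).ne'
    have h5 := (qInt_pos hq₁ hq₂ (by omega : 1 ≤ a + 1)).ne'
    field_simp
  · rcases Nat.eq_or_lt_of_le (Nat.lt_iff_add_one_le.mp h) with h' | h'
    · have : n = k := by omega
      subst this
      simp [qBinom, qInt, Nat.lt_irrefl]
    · have h1 : ¬(k + 1 ≤ n) := by omega
      have h2 : ¬(k ≤ n) := by omega
      simp [qBinom, h1, h2]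

end lemmas

section alg
variable {A : Type*} [Ring A] [Algebra ℝ A] {q : ℝ} {X Z W : A}

lemma XW_pow (hXW : X * W = q • (W * X)) (i : ℕ) :
    X * W ^ i = (q ^ i) • (W ^ i * X) := by
  induction i with
  | zero => simp
  | succ k ih =>
    rw [pow_succ, ← mul_assoc, ih, smul_mul_assoc, mul_assoc, hXW, mul_smul_comm,
      smul_smul, ← mul_assoc, ← pow_succ]

lemma XZ_pow (hq₂ : q < 1) (hXZ : X * Z = Z * X + W) (hWZ : W * Z = q • (Z * W)) (k : ℕ) :
    X * Z ^ k = Z ^ k * X + (qInt q k) • (Z ^ (k - 1) * W) := by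
  have hq' : (1:ℝ) - q ≠ 0 := by intro h; nlinarith
  have h1 : qInt q 1 = 1 := by simp only [qInt, pow_one]; exact div_self hq'
  have hsucc : ∀ j : ℕ, qInt q (j + 1) = 1 + q * qInt q j := by
    intro j
    have := qInt_add hq₂ 1 j
    rw [show 1 + j = j + 1 by omega, h1, pow_one] at this
    linarith
  induction k with
  | zero => simp [qInt]
  | succ j ih =>
    rcases Nat.eq_zero_or_pos j with rfl | hj
    · simp [h1, hXZ]
    · obtain ⟨l, rfl⟩ : ∃ l, j = l + 1 := ⟨j - 1, by omega⟩
      rw [pow_succ, ← mul_assoc, ih, add_mul, smul_mul_assoc, mul_assoc, hXZ, mul_add,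
        Nat.add_sub_cancel, mul_assoc, hWZ, mul_smul_comm, smul_smul, ← mul_assoc,
        ← pow_succ, Nat.add_sub_cancel, ← mul_assoc, ← pow_succ, hsucc (l + 1)]
      rw [add_smul, one_smul, mul_comm q (qInt q (l + 1))]
      rw [add_assoc]

lemma step_term (hq₂ : q < 1) (hXZ : X * Z = Z * X + W) (hWZ : W * Z = q • (Z * W))
    (hXW : X * W = q • (W * X)) (a i b : ℕ) :
    X * (Z ^ a * W ^ i * X ^ b)
      = (q ^ i) • (Z ^ a * W ^ i * X ^ (b + 1)) +
        (qInt q a) • (Z ^ (a - 1) * W ^ (i + 1) * X ^ b) := by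
  calc X * (Z ^ a * W ^ i * X ^ b)
      = (X * Z ^ a) * (W ^ i * X ^ b) := by simp only [mul_assoc]
    _ = (Z ^ a * X + qInt q a • (Z ^ (a - 1) * W)) * (W ^ i * X ^ b) := by
        rw [XZ_pow hq₂ hXZ hWZ]
    _ = Z ^ a * ((X * W ^ i) * X ^ b) + qInt q a • (Z ^ (a - 1) * ((W * W ^ i) * X ^ b)) := by
        simp only [add_mul, smul_mul_assoc, mul_assoc]
    _ = (q ^ i) • (Z ^ a * W ^ i * X ^ (b + 1)) +
        (qInt q a) • (Z ^ (a - 1) * W ^ (i + 1) * X ^ b) := by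
        rw [XW_pow hXW]
        simp only [smul_mul_assoc, mul_smul_comm, smul_smul, pow_succ', mul_assoc]

end alg

/-- Normal ordering for the relations `XZ = ZX + W`, `WZ = qZW`, `XW = qWX`. -/
theorem normal_ordering_XZW (q : ℝ) (hq₁ : -1 < q) (hq₂ : q < 1)
    {A : Type*} [Ring A] [Algebra ℝ A] (X Z W : A)
    (hXZ : X * Z = Z * X + W) (hWZ : W * Z = q • (Z * W)) (hXW : X * W = q • (W * X))
    (m n : ℕ) :
    X ^ m * Z ^ n =
      ∑ i ∈ Finset.range (m + 1),
        (qFact q i * qBinom q n i * qBinom q m i) •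
          (Z ^ (n - i) * W ^ i * X ^ (m - i)) := by
  induction m with
  | zero =>
    rw [Finset.sum_range_one]
    simp only [Nat.sub_zero, pow_zero, one_mul, mul_one, Nat.zero_sub]
    rw [qBinom_zero hq₁ hq₂, show qBinom q 0 0 = 1 by simp [qBinom, qFact],
      show qFact q 0 = 1 from rfl]
    norm_num
  | succ m ih =>
    have hcoef : ∀ i : ℕ,
        qFact q (i + 1) * qBinom q n (i + 1) * qBinom q (m + 1) (i + 1)
          = qFact q (i + 1) * qBinom q n (i + 1) * qBinom q m (i + 1) * q ^ (i + 1)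
            + qFact q i * qBinom q n i * qBinom q m i * qInt q (n - i) := by
      intro i
      rw [qPascal hq₁ hq₂ m i]
      have F : qFact q (i + 1) = qFact q i * qInt q (i + 1) := rfl
      rw [F]
      linear_combination (qFact q i * qBinom q m i) * (qAbsorb hq₁ hq₂ n i)
    have main : X ^ (m + 1) * Z ^ n =
        ∑ i ∈ Finset.range (m + 1),
          ((qFact q i * qBinom q n i * qBinom q m i * q ^ i) •
              (Z ^ (n - i) * W ^ i * X ^ (m + 1 - i))
            + (qFact q i * qBinom q n i * qBinom q m i * qInt q (n - i)) •
              (Z ^ (n - (i + 1)) * W ^ (i + 1) * X ^ (m + 1 - (i + 1)))) := by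
      rw [pow_succ', mul_assoc, ih, Finset.mul_sum]
      refine Finset.sum_congr rfl fun i hi => ?_
      have hi' : i ≤ m := Nat.lt_succ_iff.mp (Finset.mem_range.mp hi)
      rw [mul_smul_comm, step_term hq₂ hXZ hWZ hXW (n - i) i (m - i), smul_add,
        smul_smul, smul_smul]
      have e1 : m - i + 1 = m + 1 - i := by omega
      have e2 : n - i - 1 = n - (i + 1) := by omega
      have e3 : m - i = m + 1 - (i + 1) := by omega
      rw [e1, e2, e3]
    rw [main, Finset.sum_add_distrib]
    conv_rhs => rw [Finset.sum_range_succ']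
    have hsplit : ∀ i ∈ Finset.range (m + 1),
        (qFact q (i + 1) * qBinom q n (i + 1) * qBinom q (m + 1) (i + 1)) •
          (Z ^ (n - (i + 1)) * W ^ (i + 1) * X ^ (m + 1 - (i + 1)))
        = (qFact q (i + 1) * qBinom q n (i + 1) * qBinom q m (i + 1) * q ^ (i + 1)) •
            (Z ^ (n - (i + 1)) * W ^ (i + 1) * X ^ (m + 1 - (i + 1)))
          + (qFact q i * qBinom q n i * qBinom q m i * qInt q (n - i)) •
            (Z ^ (n - (i + 1)) * W ^ (i + 1) * X ^ (m + 1 - (i + 1))) := by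
      intro i _
      rw [hcoef i, add_smul]
    rw [Finset.sum_congr rfl hsplit, Finset.sum_add_distrib]
    have h0 : (qFact q 0 * qBinom q n 0 * qBinom q (m + 1) 0) •
        (Z ^ (n - 0) * W ^ 0 * X ^ (m + 1 - 0))
        = (qFact q 0 * qBinom q n 0 * qBinom q m 0 * q ^ 0) •
          (Z ^ (n - 0) * W ^ 0 * X ^ (m + 1 - 0)) := by
      rw [qBinom_zero hq₁ hq₂, qBinom_zero hq₁ hq₂, qBinom_zero hq₁ hq₂]
      norm_num
    rw [h0]
    set f : ℕ → A := fun i =>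
      (qFact q i * qBinom q n i * qBinom q m i * q ^ i) •
        (Z ^ (n - i) * W ^ i * X ^ (m + 1 - i)) with hf
    have e1 := Finset.sum_range_succ' f (m + 1)
    have e2 := Finset.sum_range_succ f (m + 1)
    have hzero : f (m + 1) = 0 := by
      rw [hf]
      simp only []
      rw [show qBinom q m (m + 1) = 0 from if_neg (by omega)]
      simp
    have hflip2 : (∑ i ∈ Finset.range (m + 1), f (i + 1)) + f 0
        = ∑ i ∈ Finset.range (m + 1), f i := by
      rw [← e1, e2, hzero, add_zero]
    rw [← hflip2]
    simp only [hf]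
    abel
end

section
/- (Annihilation operators acting on the vectors ξ_{s,t}) Under the q-commutation hypotheses below, for all natural numbers s and t one has c*·ξ_{s,t} = [s]_q·ξ_{s-1,t} + q^{s+k}·[t]_q·ξ_{s,t-1} and c_r*·ξ_{s,t} = q^{t+k}·[s]_q·ξ_{s-1,t} + [t]_q·ξ_{s,t-1}, where a term is interpreted as 0 when its coefficient [0]_q = 0 occurs (i.e. when s = 0 or t = 0 the corresponding term with negative index vanishes). -/
open ContinuousLinearMap

lemma qInt_zero (q : ℝ) : qInt q 0 = 0 := by simp [qInt]

lemma qInt_succ (q : ℝ) (hq : q < 1) (n : ℕ) :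
    qInt q (n + 1) = qInt q n + q ^ n := by
  have h : (1 : ℝ) - q ≠ 0 := by linarith
  unfold qInt
  field_simp
  ring

lemma qInt_succ' (q : ℝ) (hq : q < 1) (n : ℕ) :
    qInt q (n + 1) = 1 + q * qInt q n := by
  have h : (1 : ℝ) - q ≠ 0 := by linarith
  unfold qInt
  field_simp
  ring

section aux

variable {H : Type*} [NormedAddCommGroup H] [InnerProductSpace ℂ H] [CompleteSpace H]

lemma coeff_pow_mul (q : ℝ) (X : H →L[ℂ] H) (s : ℕ) :
    ((qInt q s : ℝ) : ℂ) • (X ^ (s - 1) * X) = ((qInt q s : ℝ) : ℂ) • X ^ s := by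
  cases s with
  | zero => simp [qInt_zero]
  | succ n => simp [pow_succ]

lemma coeff_pow_mul' (q : ℝ) (X Wop : H →L[ℂ] H) (s : ℕ) :
    ((qInt q s : ℝ) : ℂ) • (X ^ (s - 1) * (X * Wop)) =
      ((qInt q s : ℝ) : ℂ) • (X ^ s * Wop) := by
  cases s with
  | zero => simp [qInt_zero]
  | succ n => simp [pow_succ, mul_assoc]

lemma pow_rel1 (q : ℝ) (hq : q < 1) (A X : H →L[ℂ] H)
    (h : A * X = (q : ℂ) • (X * A) + 1) (s : ℕ) :
    A * X ^ s = ((q : ℂ) ^ s) • (X ^ s * A) + ((qInt q s : ℝ) : ℂ) • X ^ (s - 1) := by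
  induction s with
  | zero => simp [qInt_zero]
  | succ n ih =>
    have e : A * X ^ (n + 1) = (A * X ^ n) * X := by rw [pow_succ, mul_assoc]
    rw [e, ih, add_mul, smul_mul_assoc, smul_mul_assoc, mul_assoc, h,
      coeff_pow_mul q X n, mul_add, mul_one, mul_smul_comm, ← mul_assoc,
      ← pow_succ, qInt_succ q hq n, Nat.add_sub_cancel]
    push_cast
    module

lemma pow_rel2 (q : ℝ) (hq : q < 1) (A Y Wop : H →L[ℂ] H)
    (h : A * Y = Y * A + Wop) (hWY : Wop * Y = (q : ℂ) • (Y * Wop)) (t : ℕ) :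
    A * Y ^ t = Y ^ t * A + ((qInt q t : ℝ) : ℂ) • (Y ^ (t - 1) * Wop) := by
  induction t with
  | zero => simp [qInt_zero]
  | succ n ih =>
    have e : A * Y ^ (n + 1) = (A * Y ^ n) * Y := by rw [pow_succ, mul_assoc]
    have hc2 : ((qInt q n : ℝ) : ℂ) • (q : ℂ) • (Y ^ (n - 1) * (Y * Wop)) =
        ((qInt q n : ℝ) : ℂ) • (q : ℂ) • (Y ^ n * Wop) := by
      cases n with
      | zero => simp [qInt_zero]
      | succ m => simp [pow_succ, mul_assoc]
    rw [e, ih, add_mul, smul_mul_assoc, mul_assoc, mul_assoc, hWY, h,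
      mul_smul_comm, hc2, mul_add, ← mul_assoc, ← pow_succ,
      qInt_succ' q hq n, Nat.add_sub_cancel]
    push_cast
    module

end aux

/-- Annihilation operators acting on the vectors `ξ_{s,t} = c^s c_r^t ξ`. -/
theorem annihilation_on_xi (q : ℝ) (hq₁ : -1 < q) (hq₂ : q < 1)
    {H : Type*} [NormedAddCommGroup H] [InnerProductSpace ℂ H] [CompleteSpace H]
    (c cr W : H →L[ℂ] H)
    (h1 : adjoint c * c = (q : ℂ) • (c * adjoint c) + 1)
    (h2 : adjoint cr * cr = (q : ℂ) • (cr * adjoint cr) + 1)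
    (h3 : c * cr = cr * c)
    (h4 : adjoint c * cr = cr * adjoint c + W)
    (h5 : adjoint cr * c = c * adjoint cr + W)
    (h6 : W * c = (q : ℂ) • (c * W))
    (h7 : W * cr = (q : ℂ) • (cr * W))
    (h8 : adjoint c * W = (q : ℂ) • (W * adjoint c))
    (h9 : adjoint cr * W = (q : ℂ) • (W * adjoint cr))
    (k : ℕ) (ξ : H) (hξ : ‖ξ‖ = 1)
    (hc : adjoint c ξ = 0) (hcr : adjoint cr ξ = 0)
    (hW : W ξ = ((q : ℂ) ^ k) • ξ) (s t : ℕ) :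
    adjoint c ((c ^ s * cr ^ t) ξ) =
      ((qInt q s : ℝ) : ℂ) • ((c ^ (s - 1) * cr ^ t) ξ) +
      ((q ^ (s + k) * qInt q t : ℝ) : ℂ) • ((c ^ s * cr ^ (t - 1)) ξ) ∧
    adjoint cr ((c ^ s * cr ^ t) ξ) =
      ((q ^ (t + k) * qInt q s : ℝ) : ℂ) • ((c ^ (s - 1) * cr ^ t) ξ) +
      ((qInt q t : ℝ) : ℂ) • ((c ^ s * cr ^ (t - 1)) ξ) := by
  have e1 := pow_rel1 q hq₂ (adjoint c) c h1 s
  have e2 := pow_rel2 q hq₂ (adjoint c) cr W h4 h7 t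
  have e3 := pow_rel1 q hq₂ (adjoint cr) cr h2 t
  have e4 := pow_rel2 q hq₂ (adjoint cr) c W h5 h6 s
  -- action of `adjoint c` on `cr^t ξ`
  have a2 : adjoint c ((cr ^ t) ξ) =
      (((qInt q t : ℝ) : ℂ) * (q : ℂ) ^ k) • ((cr ^ (t - 1)) ξ) := by
    have := congrArg (fun (T : H →L[ℂ] H) => T ξ) e2
    simp only [ContinuousLinearMap.mul_apply, add_apply, smul_apply] at this
    rw [this, hc, hW]
    simp [smul_smul, mul_comm]
  have a4 : adjoint cr ((c ^ s) ξ) =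
      (((qInt q s : ℝ) : ℂ) * (q : ℂ) ^ k) • ((c ^ (s - 1)) ξ) := by
    have := congrArg (fun (T : H →L[ℂ] H) => T ξ) e4
    simp only [ContinuousLinearMap.mul_apply, add_apply, smul_apply] at this
    rw [this, hcr, hW]
    simp [smul_smul, mul_comm]
  -- c^s and cr^t commute
  have hcomm : ∀ (m n : ℕ), c ^ m * cr ^ n = cr ^ n * c ^ m := fun m n =>
    Commute.pow_pow (by exact h3) m n
  constructor
  · have := congrArg (fun (T : H →L[ℂ] H) => T ((cr ^ t) ξ)) e1
    simp only [ContinuousLinearMap.mul_apply, add_apply, smul_apply] at this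
    simp only [ContinuousLinearMap.mul_apply]
    rw [this, a2]
    simp only [map_smul]
    match_scalars <;> (push_cast; ring)
  · have := congrArg (fun (T : H →L[ℂ] H) => T ((c ^ s) ξ)) e3
    simp only [ContinuousLinearMap.mul_apply, add_apply, smul_apply] at this
    have key : (c ^ s * cr ^ t) ξ = (cr ^ t) ((c ^ s) ξ) := by
      rw [hcomm, ContinuousLinearMap.mul_apply]
    rw [key, this, a4]
    simp only [map_smul]
    have r1 : (cr ^ t) ((c ^ (s - 1)) ξ) = (c ^ (s - 1) * cr ^ t) ξ := by
      rw [← ContinuousLinearMap.mul_apply, ← hcomm]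
    have r2 : (cr ^ (t - 1)) ((c ^ s) ξ) = (c ^ s * cr ^ (t - 1)) ξ := by
      rw [← ContinuousLinearMap.mul_apply, ← hcomm]
    rw [r1, r2]
    match_scalars <;> (push_cast; ring)
end
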